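/- arXiv:2110.02534 — 3 statements merged into one kernel-verified Lean document; each statement's English description precedes it below -/
import Mathlib

section
/- In the full matrix algebra $\mathrm{M}_n(K)$ over a field $K$ with $\mathrm{char}(K)\neq 2$, the permutation matrix $P=E_{1,2}+E_{2,3}+\cdots+E_{n-1,n}+E_{n,1}$ and the matrix unit $E_{1,1}$ generate $\mathrm{M}_n(K)$ as a Lie algebra under the commutator bracket $[X,Y]=XY-YX$. -/
attribute [local instance 100] LieRing.ofAssociativeRing

open Fin.NatCast Fin.CommRing

/-- The cyclic permutation matrix `P = E₁₂ + E₂₃ + ⋯ + E_{n-1,n} + E_{n,1}` and the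
matrix unit `E₁₁` generate `Mₙ(K)` as a Lie algebra under the commutator bracket,
when `char K ≠ 2`. -/
theorem perm_and_E11_lie_generate (K : Type*) [Field K] (h2 : (2 : K) ≠ 0)
    (n : ℕ) [NeZero n] :
    LieSubalgebra.lieSpan K (Matrix (Fin n) (Fin n) K)
      {Matrix.of (fun i j : Fin n => if j = i + 1 then (1 : K) else 0),
       Matrix.single (0 : Fin n) (0 : Fin n) (1 : K)} = ⊤ := by
  set P : Matrix (Fin n) (Fin n) K :=
    Matrix.of (fun i j : Fin n => if j = i + 1 then (1 : K) else 0) with hPdef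
  set E : Fin n → Fin n → Matrix (Fin n) (Fin n) K :=
    fun i j => Matrix.single i j (1 : K) with hEdef
  set L := LieSubalgebra.lieSpan K (Matrix (Fin n) (Fin n) K) {P, E 0 0} with hL
  have hP : P ∈ L := LieSubalgebra.subset_lieSpan (by left; rfl)
  have hE00 : E 0 0 ∈ L := LieSubalgebra.subset_lieSpan (by right; rfl)
  -- multiplication formulas
  have PmulE : ∀ a b : Fin n, P * E a b = E (a - 1) b := by
    intro a b
    ext i j
    rw [Matrix.mul_apply]
    simp only [hPdef, hEdef, Matrix.single, Matrix.of_apply, ite_mul, one_mul, zero_mul]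
    rw [Finset.sum_ite_eq' Finset.univ (i + 1) (fun k => if a = k ∧ b = j then (1 : K) else 0)]
    simp only [Finset.mem_univ, if_true]
    by_cases hb : b = j
    · by_cases ha : a = i + 1
      · have : a - 1 = i := by rw [ha]; ring
        simp [ha, hb, this]
      · have : a - 1 ≠ i := fun h => ha (by rw [← h]; ring)
        simp [ha, hb, this]
    · simp [hb]
  have EmulP : ∀ a b : Fin n, E a b * P = E a (b + 1) := by
    intro a b
    ext i j
    rw [Matrix.mul_apply]
    simp only [hPdef, hEdef, Matrix.single, Matrix.of_apply, ite_and]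
    rw [Finset.sum_eq_single b]
    · by_cases ha : a = i
      · by_cases hj : j = b + 1
        · simp [ha, hj]
        · have : ¬ (b + 1 = j) := fun h => hj h.symm
          simp [ha, hj, this]
      · simp [ha]
    · intro k _ hk
      have : ¬ (b = k) := fun h => hk h.symm
      simp [this]
    · intro h; exact absurd (Finset.mem_univ b) h
  have lieP : ∀ a b : Fin n, ⁅P, E a b⁆ = E (a - 1) b - E a (b + 1) := by
    intro a b
    rw [Ring.lie_def, PmulE, EmulP]
  -- all the standard basis matrices lie in L
  have key : ∀ i j : Fin n, E i j ∈ L := by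
    rcases Nat.lt_or_ge n 2 with hn | hn
    · -- n = 1
      have hn1 : n = 1 := by have := Nat.pos_of_ne_zero (NeZero.ne n); omega
      subst hn1
      intro i j
      have hi : i = 0 := Subsingleton.elim i 0
      have hj : j = 0 := Subsingleton.elim j 0
      rw [hi, hj]; exact hE00
    · -- n ≥ 2
      have hval : ∀ m : ℕ, m < n → ((m : Fin n)).val = m := fun m hm => Fin.val_cast_of_lt hm
      have hone : ((1 : Fin n)).val = 1 := by
        rw [Fin.val_one' n]; exact Nat.mod_eq_of_lt (by omega)
      have h1ne0 : (1 : Fin n) ≠ 0 := fun h => by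
        have := congrArg Fin.val h
        rw [hone] at this
        simp at this
      have hneg1 : (-1 : Fin n) ≠ 0 := by
        intro h
        exact h1ne0 (neg_eq_zero.mp h)
      -- the two basic brackets
      have eq1 : ⁅P, E 0 0⁆ = E (-1) 0 - E 0 1 := by
        rw [lieP]; rw [zero_sub, zero_add]
      have eq2 : ⁅⁅P, E 0 0⁆, E 0 0⁆ = E (-1) 0 + E 0 1 := by
        rw [eq1, sub_lie, Ring.lie_def, Ring.lie_def]
        simp only [hEdef]
        rw [Matrix.single_mul_single_same, Matrix.single_mul_single_of_ne (h := Ne.symm hneg1),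
          Matrix.single_mul_single_of_ne (h := h1ne0), Matrix.single_mul_single_same]
        rw [mul_one]
        abel
      have hA1 : ⁅P, E 0 0⁆ ∈ L := L.lie_mem hP hE00
      have hA2 : ⁅⁅P, E 0 0⁆, E 0 0⁆ ∈ L := L.lie_mem hA1 hE00
      have hv : E (-1) 0 ∈ L := by
        have hsum : ⁅P, E 0 0⁆ + ⁅⁅P, E 0 0⁆, E 0 0⁆ = (2 : K) • E (-1) 0 := by
          rw [eq2, eq1]; module
        have := L.smul_mem (2⁻¹ : K) (L.add_mem hA1 hA2)
        rwa [hsum, smul_smul, inv_mul_cancel₀ h2, one_smul] at this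
      have hu : E 0 1 ∈ L := by
        have hsum : ⁅⁅P, E 0 0⁆, E 0 0⁆ - ⁅P, E 0 0⁆ = (2 : K) • E 0 1 := by
          rw [eq2, eq1]; module
        have := L.smul_mem (2⁻¹ : K) (L.sub_mem hA2 hA1)
        rwa [hsum, smul_smul, inv_mul_cancel₀ h2, one_smul] at this
      -- row zero
      have row : ∀ m : ℕ, 1 ≤ m → m < n → E 0 (m : Fin n) ∈ L := by
        intro m
        induction m with
        | zero => omega
        | succ k ih =>
          intro _ hlt
          rcases Nat.eq_zero_or_pos k with hk0 | hk1
          · subst hk0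
            simpa using hu
          · have hklt : k < n := by omega
            have hk := ih hk1 hklt
            have hkne : (k : Fin n) ≠ -1 := by
              intro h
              have : ((k : Fin n)) + 1 = 0 := by rw [h]; ring
              have h' : ((k + 1 : ℕ) : Fin n) = 0 := by push_cast; exact this
              have := congrArg Fin.val h'
              rw [hval (k + 1) hlt] at this
              simp at this
            have hw : ⁅E (-1) 0, E 0 (k : Fin n)⁆ = E (-1) (k : Fin n) := by
              rw [Ring.lie_def]
              simp only [hEdef]
              rw [Matrix.single_mul_single_same,
                Matrix.single_mul_single_of_ne (h := hkne), mul_one, sub_zero]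
            have hwL : E (-1) (k : Fin n) ∈ L := hw ▸ L.lie_mem hv hk
            have hPk : ⁅P, E 0 (k : Fin n)⁆ = E (-1) (k : Fin n) - E 0 ((k + 1 : ℕ) : Fin n) := by
              rw [lieP, zero_sub]
              congr 1
              push_cast
              ring_nf
            have : E 0 ((k + 1 : ℕ) : Fin n) =
                E (-1) (k : Fin n) - ⁅P, E 0 (k : Fin n)⁆ := by
              rw [hPk, sub_sub_cancel]
            rw [this]
            exact L.sub_mem hwL (L.lie_mem hP hk)
      -- column zero
      have col : ∀ m : ℕ, 1 ≤ m → m < n → E ((n - m : ℕ) : Fin n) 0 ∈ L := by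
        intro m
        induction m with
        | zero => omega
        | succ k ih =>
          intro _ hlt
          rcases Nat.eq_zero_or_pos k with hk0 | hk1
          · subst hk0
            have hcast : ((n - 1 : ℕ) : Fin n) = -1 := by
              have h1 : ((n - 1 : ℕ) : Fin n) + 1 = 0 := by
                have : ((n - 1 + 1 : ℕ) : Fin n) = ((n : ℕ) : Fin n) := by
                  congr 1; omega
                rw [← Nat.cast_add_one, this, Fin.natCast_self]
              exact eq_neg_of_add_eq_zero_left h1
            rw [hcast]; exact hv
          · have hklt : k < n := by omega
            have hk := ih hk1 hklt
            have h2nk : 2 ≤ n - k := by omega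
            have hank : n - k < n := by omega
            have hane1 : ((n - k : ℕ) : Fin n) ≠ 1 := by
              intro h
              have := congrArg Fin.val h
              rw [hval (n - k) hank, hone] at this
              omega
            have hw : ⁅E ((n - k : ℕ) : Fin n) 0, E 0 1⁆ = E ((n - k : ℕ) : Fin n) 1 := by
              rw [Ring.lie_def]
              simp only [hEdef]
              rw [Matrix.single_mul_single_same,
                Matrix.single_mul_single_of_ne (h := Ne.symm hane1), mul_one, sub_zero]
            have hwL : E ((n - k : ℕ) : Fin n) 1 ∈ L := hw ▸ L.lie_mem hk hu
            have hsub : ((n - k : ℕ) : Fin n) - 1 = ((n - (k + 1) : ℕ) : Fin n) := by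
              have : (n - k : ℕ) = (n - (k + 1)) + 1 := by omega
              rw [this]
              push_cast
              ring
            have hPa : ⁅P, E ((n - k : ℕ) : Fin n) 0⁆ =
                E ((n - (k + 1) : ℕ) : Fin n) 0 - E ((n - k : ℕ) : Fin n) 1 := by
              rw [lieP, hsub, zero_add]
            have : E ((n - (k + 1) : ℕ) : Fin n) 0 =
                ⁅P, E ((n - k : ℕ) : Fin n) 0⁆ + E ((n - k : ℕ) : Fin n) 1 := by
              rw [hPa, sub_add_cancel]
            rw [this]
            exact L.add_mem (L.lie_mem hP hk) hwL
      -- now all entries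
      intro i j
      by_cases hi : i = 0
      · by_cases hj : j = 0
        · rw [hi, hj]; exact hE00
        · have hj1 : 1 ≤ j.val := by
            rcases Nat.eq_zero_or_pos j.val with h | h
            · exact absurd (Fin.ext (by simp [h])) hj
            · exact h
          have := row j.val hj1 j.isLt
          rw [Fin.cast_val_eq_self j] at this
          rw [hi]; exact this
      · have hi1 : 1 ≤ i.val := by
          rcases Nat.eq_zero_or_pos i.val with h | h
          · exact absurd (Fin.ext (by simp [h])) hi
          · exact h
        have hcolL : E i 0 ∈ L := by
          have h1 : 1 ≤ n - i.val := by have := i.isLt; omega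
          have h2' : n - i.val < n := by omega
          have := col (n - i.val) h1 h2'
          have hcast : ((n - (n - i.val) : ℕ) : Fin n) = i := by
            have : n - (n - i.val) = i.val := by have := i.isLt; omega
            rw [this, Fin.cast_val_eq_self]
          rw [hcast] at this
          exact this
        by_cases hj : j = 0
        · rw [hj]; exact hcolL
        · have hj1 : 1 ≤ j.val := by
            rcases Nat.eq_zero_or_pos j.val with h | h
            · exact absurd (Fin.ext (by simp [h])) hj
            · exact h
          have hrowL : E 0 j ∈ L := by
            have := row j.val hj1 j.isLt
            rwa [Fin.cast_val_eq_self j] at this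
          by_cases hij : j = i
          · subst hij
            have hb : ⁅E j 0, E 0 j⁆ = E j j - E 0 0 := by
              rw [Ring.lie_def]
              simp only [hEdef]
              rw [Matrix.single_mul_single_same, Matrix.single_mul_single_same, mul_one]
            have : E j j = ⁅E j 0, E 0 j⁆ + E 0 0 := by rw [hb, sub_add_cancel]
            rw [this]
            exact L.add_mem (L.lie_mem hcolL hrowL) hE00
          · have hb : ⁅E i 0, E 0 j⁆ = E i j := by
              rw [Ring.lie_def]
              simp only [hEdef]
              rw [Matrix.single_mul_single_same,
                Matrix.single_mul_single_of_ne (h := hij), mul_one, sub_zero]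
            rw [← hb]
            exact L.lie_mem hcolL hrowL
  -- conclude
  rw [eq_top_iff]
  intro x _
  rw [Matrix.matrix_eq_sum_single x]
  rw [← LieSubalgebra.mem_toSubmodule L]
  refine Submodule.sum_mem _ (fun i _ => Submodule.sum_mem _ (fun j _ => ?_))
  have : Matrix.single i j (x i j) = (x i j) • E i j := by
    rw [hEdef, Matrix.smul_single, smul_eq_mul, mul_one]
  rw [this]
  exact Submodule.smul_mem _ _ ((LieSubalgebra.mem_toSubmodule L).mpr (key i j))
end

section
/- In any associative ring $R$, for $r,x_1,\ldots,x_j\in R$, the left-normed commutator $[x_1,x_2,\ldots,x_j,r]_{j+1}$ can be written as a sum of $2^{j-1}$ terms of the form $\pm[r,x_{\pi(1)},\ldots,x_{\pi(j)}]_{j+1}$ where each $\pi$ is some permutation of $\{1,\ldots,j\}$; in particular, if $[r,y_1,\ldots,y_j]_{j+1}=0$ for all choices $y_1,\ldots,y_j$ from $\{x_1,\ldots,x_j\}$, then $[x_1,\ldots,x_j,r]_{j+1}=0$. -/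
/-- `lprod r [x₁, …, xₘ]` is the left-normed commutator `[r, x₁, …, xₘ]`. -/
def lprod {R : Type*} [Ring R] (r : R) (l : List R) : R :=
  l.foldl (fun a x => a * x - x * a) r

/-- `llc [x₁, …, xₘ]` is the left-normed commutator `[x₁, …, xₘ]ₘ` (and `0` on `[]`). -/
def llc {R : Type*} [Ring R] : List R → R
  | [] => 0
  | a :: t => lprod a t

section helpers

variable {R : Type*} [Ring R]

lemma lprod_nil (r : R) : lprod r [] = r := rfl

lemma lprod_cons (r c : R) (l : List R) : lprod r (c :: l) = lprod (r * c - c * r) l := rfl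

lemma lprod_append (r : R) (l₁ l₂ : List R) :
    lprod r (l₁ ++ l₂) = lprod (lprod r l₁) l₂ := by
  simp [lprod, List.foldl_append]

lemma lprod_concat (r c : R) (l : List R) :
    lprod r (l ++ [c]) = lprod r l * c - c * lprod r l := by
  rw [lprod_append]; rfl

lemma lprod_add (a b : R) (l : List R) : lprod (a + b) l = lprod a l + lprod b l := by
  induction l generalizing a b with
  | nil => rfl
  | cons c t ih =>
    rw [lprod_cons, lprod_cons, lprod_cons, ← ih]
    congr 1
    noncomm_ring

lemma lprod_zero (l : List R) : lprod (0 : R) l = 0 := by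
  induction l with
  | nil => rfl
  | cons c t ih => rw [lprod_cons]; simpa using ih

/-- `lprod · l` as an additive group hom in the first argument. -/
def lprodHom (l : List R) : R →+ R where
  toFun a := lprod a l
  map_zero' := lprod_zero l
  map_add' a b := lprod_add a b l

lemma lprod_zsmul (n : ℤ) (a : R) (l : List R) : lprod (n • a) l = n • lprod a l :=
  map_zsmul (lprodHom l) n a

lemma llc_concat (c : R) {l : List R} (hl : l ≠ []) :
    llc (l ++ [c]) = llc l * c - c * llc l := by
  match l with
  | h :: t => show lprod h ((t ++ [c])) = _; rw [lprod_concat]; rfl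

/-- Bridging lemma: a list that is a permutation of `List.ofFn x` is of the
form `List.ofFn (x ∘ σ)` for some permutation `σ`. -/
lemma exists_perm_of_perm_ofFn {α : Type*} {l₁ l₂ : List α} (h : l₁.Perm l₂) :
    ∀ {n : ℕ} (x : Fin n → α), l₂ = List.ofFn x →
      ∃ σ : Equiv.Perm (Fin n), l₁ = List.ofFn (x ∘ σ) := by
  induction h with
  | nil =>
    intro n x hx
    match n, x with
    | 0, x => exact ⟨1, rfl⟩
    | n + 1, x => simp [List.ofFn_succ] at hx
  | @cons a l₁ l₂ h ih =>
    intro n x hx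
    match n, x with
    | 0, x => simp at hx
    | n + 1, x =>
      rw [List.ofFn_succ] at hx
      obtain ⟨ha, hl⟩ := List.cons_eq_cons.mp hx
      obtain ⟨σ, hσ⟩ := ih (x ∘ Fin.succ) hl
      refine ⟨Equiv.Perm.decomposeFin.symm (0, σ), ?_⟩
      have hfun : x ∘ (Equiv.Perm.decomposeFin.symm (0, σ)) =
          Fin.cons (x 0) ((x ∘ Fin.succ) ∘ σ) := by
        funext i
        refine Fin.cases ?_ (fun i => ?_) i
        · simp
        · simp [Function.comp, Equiv.Perm.decomposeFin_symm_apply_succ]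
      rw [hfun, List.ofFn_succ]
      simp only [Fin.cons_zero, Fin.cons_succ]
      rw [← hσ, ← ha]
  | swap a b l =>
    intro n x hx
    match n, x with
    | 0, x => simp at hx
    | 1, x => simp [List.ofFn_succ] at hx
    | n + 2, x =>
      rw [List.ofFn_succ, List.ofFn_succ] at hx
      obtain ⟨hb, hx2⟩ := List.cons_eq_cons.mp hx
      obtain ⟨ha, hl⟩ := List.cons_eq_cons.mp hx2
      refine ⟨Equiv.swap 0 1, ?_⟩
      have hsucc0 : (Fin.succ (0 : Fin (n + 1))) = (1 : Fin (n + 2)) := rfl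
      have hfun : x ∘ (Equiv.swap 0 1) =
          Fin.cons (x 1) (Fin.cons (x 0) (fun i : Fin n => x i.succ.succ)) := by
        funext i
        refine Fin.cases ?_ (fun i => ?_) i
        · simp
        · refine Fin.cases ?_ (fun i' => ?_) i
          · simp [hsucc0]
          · have hne0 : (Fin.succ (Fin.succ i')) ≠ (0 : Fin (n + 2)) := Fin.succ_ne_zero _
            have hne1 : (Fin.succ (Fin.succ i')) ≠ (1 : Fin (n + 2)) := by
              rw [← hsucc0, Ne, Fin.succ_inj]
              exact Fin.succ_ne_zero _
            simp [Function.comp, Equiv.swap_apply_of_ne_of_ne hne0 hne1]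
      rw [hfun, List.ofFn_succ, List.ofFn_succ]
      simp only [Fin.cons_zero, Fin.cons_succ]
      rw [← hl, hb, ha, hsucc0]
  | trans h₁ h₂ ih₁ ih₂ =>
    intro n x hx
    obtain ⟨σ, hσ⟩ := ih₂ x hx
    obtain ⟨τ, hτ⟩ := ih₁ (x ∘ σ) hσ
    exact ⟨σ * τ, by rw [hτ]; rfl⟩

/-- Key lemma: the commutator `[a, llc l]` is a sum of `2 ^ (n - 1)` terms
`± lprod a (L m)` where each `L m` is a permutation of `l`. -/
lemma key_comm (n : ℕ) (l : List R) (hlen : l.length = n) (hne : l ≠ []) :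
    ∃ ε : Fin (2 ^ (n - 1)) → ℤ, ∃ L : Fin (2 ^ (n - 1)) → List R,
      (∀ m, ε m = 1 ∨ ε m = -1) ∧ (∀ m, (L m).Perm l) ∧
      ∀ a : R, a * llc l - llc l * a = ∑ m, ε m • lprod a (L m) := by
  induction l using List.reverseRecOn generalizing n with
  | nil => exact absurd rfl hne
  | append_singleton l c ih =>
    subst hlen
    rcases eq_or_ne l [] with rfl | hl
    · -- base case : singleton list [c]
      refine ⟨fun _ => 1, fun _ => [c], fun m => Or.inl rfl, fun m => List.Perm.refl _, ?_⟩
      intro a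
      show a * lprod c [] - lprod c [] * a = _
      simp only [lprod_nil, lprod_cons, one_smul, Finset.sum_const, Finset.card_univ, Fintype.card_fin]
      simp
    · obtain ⟨ε, L, hε, hL, hid⟩ := ih l.length rfl hl
      have h1 : 1 ≤ l.length := List.length_pos_iff.mpr hl
      have hcard : 2 ^ ((l ++ [c]).length - 1)
          = 2 ^ (l.length - 1) + 2 ^ (l.length - 1) := by
        have h2 : (l ++ [c]).length - 1 = (l.length - 1) + 1 := by
          simp only [List.length_append, List.length_singleton]
          omega
        rw [h2, pow_succ, mul_two]
      set e : Fin (2 ^ ((l ++ [c]).length - 1)) ≃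
          Fin (2 ^ (l.length - 1)) ⊕ Fin (2 ^ (l.length - 1)) :=
        (finCongr hcard).trans finSumFinEquiv.symm with he
      refine ⟨fun m => Sum.elim ε (fun i => -ε i) (e m),
              fun m => Sum.elim (fun i => L i ++ [c]) (fun i => c :: L i) (e m),
              ?_, ?_, ?_⟩
      · intro m
        cases h : e m with
        | inl i => simpa [h] using hε i
        | inr i => rcases hε i with h' | h' <;> simp [h, h']
      · intro m
        cases h : e m with
        | inl i => simpa [h] using (hL i).append_right [c]
        | inr i =>
          have hp : (c :: L i).Perm (l ++ [c]) :=
            ((hL i).cons c).trans (List.perm_append_singleton c l).symm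
          simpa [h] using hp
      · intro a
        have hllc : llc (l ++ [c]) = llc l * c - c * llc l := llc_concat c hl
        set X := llc l with hX
        have step : a * (X * c - c * X) - (X * c - c * X) * a =
            ((a * X - X * a) * c - c * (a * X - X * a))
              - ((a * c - c * a) * X - X * (a * c - c * a)) := by noncomm_ring
        have h1 : (∑ m : Fin (2 ^ (l.length - 1)), ε m • lprod a (L m)) * c
            - c * (∑ m : Fin (2 ^ (l.length - 1)), ε m • lprod a (L m))
            = ∑ m : Fin (2 ^ (l.length - 1)), ε m • lprod a (L m ++ [c]) := by
          rw [Finset.sum_mul, Finset.mul_sum, ← Finset.sum_sub_distrib]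
          refine Finset.sum_congr rfl fun m _ => ?_
          rw [lprod_concat, smul_mul_assoc, mul_smul_comm, smul_sub]
        have h2 : (a * c - c * a) * X - X * (a * c - c * a)
            = ∑ m : Fin (2 ^ (l.length - 1)), ε m • lprod a (c :: L m) := by
          rw [hid (a * c - c * a)]
          exact Finset.sum_congr rfl fun m _ => by rw [lprod_cons]
        have hsum : (∑ m : Fin (2 ^ ((l ++ [c]).length - 1)),
              Sum.elim ε (fun i => -ε i) (e m) •
                lprod a (Sum.elim (fun i => L i ++ [c]) (fun i => c :: L i) (e m)))
            = (∑ i : Fin (2 ^ (l.length - 1)), ε i • lprod a (L i ++ [c]))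
              + ∑ i : Fin (2 ^ (l.length - 1)), (-ε i) • lprod a (c :: L i) := by
          rw [Fintype.sum_equiv e _
            (fun s => Sum.elim ε (fun i => -ε i) s •
              lprod a (Sum.elim (fun i => L i ++ [c]) (fun i => c :: L i) s))
            (fun m => rfl), Fintype.sum_sum_type]
          simp
        rw [hllc, step, hid a, h1, h2, hsum, sub_eq_add_neg, ← Finset.sum_neg_distrib]
        congr 1
        exact Finset.sum_congr rfl fun m _ => by rw [neg_smul]

end helpers

/-- In any associative ring, `[x₁, …, xⱼ, r]_{j+1}` is a sum of `2^{j-1}` terms of the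
form `±[r, x_{π(1)}, …, x_{π(j)}]_{j+1}` for permutations `π`; in particular it vanishes
whenever all the left-normed commutators starting with `r` with entries among the `xᵢ`
vanish. -/
theorem left_normed_comm_rewriting {R : Type*} [Ring R] {j : ℕ} (hj : 1 ≤ j)
    (r : R) (x : Fin j → R) :
    (∃ ε : Fin (2 ^ (j - 1)) → ℤ, ∃ π : Fin (2 ^ (j - 1)) → Equiv.Perm (Fin j),
      (∀ m, ε m = 1 ∨ ε m = -1) ∧
      llc (List.ofFn x ++ [r]) =
        ∑ m : Fin (2 ^ (j - 1)), ε m • lprod r (List.ofFn (x ∘ π m))) ∧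
    ((∀ y : Fin j → R, (∀ i, ∃ i', y i = x i') → lprod r (List.ofFn y) = 0) →
      llc (List.ofFn x ++ [r]) = 0) := by
  have hne : List.ofFn x ≠ [] := by
    simp only [← List.length_pos_iff, List.length_ofFn]
    omega
  obtain ⟨ε, L, hε, hL, hid⟩ := key_comm j (List.ofFn x) List.length_ofFn hne
  have hπ : ∀ m, ∃ σ : Equiv.Perm (Fin j), L m = List.ofFn (x ∘ σ) :=
    fun m => exists_perm_of_perm_ofFn (hL m) x rfl
  choose π hπ using hπ
  have main : llc (List.ofFn x ++ [r]) =
      ∑ m : Fin (2 ^ (j - 1)), (-ε m) • lprod r (List.ofFn (x ∘ π m)) := by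
    rw [llc_concat r hne]
    have : llc (List.ofFn x) * r - r * llc (List.ofFn x)
        = -(r * llc (List.ofFn x) - llc (List.ofFn x) * r) := (neg_sub _ _).symm
    rw [this, hid r, ← Finset.sum_neg_distrib]
    exact Finset.sum_congr rfl fun m _ => by rw [hπ m, neg_smul]
  constructor
  · exact ⟨fun m => -ε m, π, fun m => (hε m).symm.imp (by simp +contextual)
      (by simp +contextual), main⟩
  · intro hy
    rw [main]
    refine Finset.sum_eq_zero fun m _ => ?_
    rw [hy (x ∘ π m) (fun i => ⟨π m i, rfl⟩), smul_zero]
end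

section
/- Let $H$ be a subset of an associative unital $K$-algebra $R$ and suppose $r\in\mathrm{L}_k(H)$ (the $k$-th Lie centralizer). Then for any $1\le j\le k$ and any $x_1,\ldots,x_k\in H$, the left-normed commutator $[x_1,\ldots,x_j,r,x_{j+1},\ldots,x_k]_{k+1}=0$. -/
/-- The `k`-th Lie centralizer of a subset `H` of `R`:
`Lcen k H = {r : R | [r, x₁, …, x_k]_{k+1} = 0 for all xᵢ ∈ H}`. -/
def Lcen {R : Type*} [Ring R] (k : ℕ) (H : Set R) : Set R :=
  {r : R | ∀ x : Fin k → R, (∀ i, x i ∈ H) → lprod r (List.ofFn x) = 0}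

namespace LcenAux

variable {R : Type*} [Ring R]

/-- List-based version of the Lie centralizer. -/
def Sn (n : ℕ) (H : Set R) : Set R :=
  {r | ∀ t : List R, (∀ a ∈ t, a ∈ H) → t.length = n → lprod r t = 0}

lemma lprod_cons (r a : R) (t : List R) :
    lprod r (a :: t) = lprod (r * a - a * r) t := rfl

lemma lprod_append (r : R) (t₁ t₂ : List R) :
    lprod r (t₁ ++ t₂) = lprod (lprod r t₁) t₂ := by
  simp [lprod, List.foldl_append]

lemma lprod_sub (u v : R) (t : List R) :
    lprod (u - v) t = lprod u t - lprod v t := by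
  induction t generalizing u v with
  | nil => rfl
  | cons a t ih =>
    rw [lprod_cons, lprod_cons u, lprod_cons v, ← ih]
    congr 1
    noncomm_ring

lemma lprod_zero (t : List R) : lprod (0 : R) t = 0 := by
  induction t with
  | nil => rfl
  | cons a t ih => rw [lprod_cons]; simpa using ih

lemma lprod_neg (u : R) (t : List R) : lprod (-u) t = - lprod u t := by
  have := lprod_sub (0 : R) u t
  simpa [lprod_zero] using this

lemma Sn_sub {H : Set R} {n : ℕ} {u v : R} (hu : u ∈ Sn n H) (hv : v ∈ Sn n H) :
    u - v ∈ Sn n H := by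
  intro t ht hlen
  rw [lprod_sub, hu t ht hlen, hv t ht hlen, sub_zero]

lemma Sn_bracket {H : Set R} {n : ℕ} {w : R} (hw : w ∈ Sn (n + 1) H) {a : R} (ha : a ∈ H) :
    w * a - a * w ∈ Sn n H := by
  intro t ht hlen
  have := hw (a :: t) (by
    intro b hb
    rcases List.mem_cons.mp hb with rfl | hb
    · exact ha
    · exact ht b hb) (by simp [hlen])
  rwa [lprod_cons] at this

lemma llc_singleton (a : R) : llc [a] = a := rfl

lemma llc_append_singleton {l : List R} (hl : l ≠ []) (a : R) :
    llc (l ++ [a]) = llc l * a - a * llc l := by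
  obtain ⟨b, t, rfl⟩ := List.exists_cons_of_ne_nil hl
  show lprod b (t ++ [a]) = _
  rw [lprod_append]
  rfl

lemma key {H : Set R} :
    ∀ l : List R, l ≠ [] → (∀ a ∈ l, a ∈ H) → ∀ (n : ℕ) (r : R), r ∈ Sn n H →
      l.length ≤ n → r * llc l - llc l * r ∈ Sn (n - l.length) H := by
  intro l
  induction l using List.reverseRecOn with
  | nil => intro h; exact absurd rfl h
  | append_singleton l a ih =>
    intro _ hmem n r hr hlen
    have ha : a ∈ H := hmem a (by simp)
    rcases eq_or_ne l [] with rfl | hl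
    · simp only [List.nil_append, llc_singleton, List.length_singleton] at *
      obtain ⟨m, rfl⟩ : ∃ m, n = m + 1 := ⟨n - 1, by omega⟩
      simpa using Sn_bracket hr ha
    · have hlen' : l.length + 1 ≤ n := by simpa using hlen
      have hmem' : ∀ b ∈ l, b ∈ H := fun b hb => hmem b (by simp [hb])
      set u := llc l with hu
      set m := l.length with hm
      rw [llc_append_singleton hl a, List.length_append, List.length_singleton, ← hu, ← hm]
      have hAB : r * (u * a - a * u) - (u * a - a * u) * r =
          ((r * u - u * r) * a - a * (r * u - u * r)) -
          ((r * a - a * r) * u - u * (r * a - a * r)) := by noncomm_ring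
      rw [hAB]
      apply Sn_sub
      · -- A = [[r,u],a]
        have h1 : r * u - u * r ∈ Sn (n - m) H := ih hl hmem' n r hr (by omega)
        have : n - m = (n - (m + 1)) + 1 := by omega
        rw [this] at h1
        exact Sn_bracket h1 ha
      · -- B = [[r,a],u]
        obtain ⟨p, hp⟩ : ∃ p, n = p + 1 := ⟨n - 1, by omega⟩
        have h2 : r * a - a * r ∈ Sn p H := Sn_bracket (hp ▸ hr) ha
        have h3 := ih hl hmem' p _ h2 (by omega)
        have : p - m = n - (m + 1) := by omega
        rwa [this] at h3

end LcenAux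

/-- If `r ∈ L_k(H)`, then inserting `r` into any position of a length-`k+1` left-normed
commutator with the other entries from `H` gives zero. -/
theorem mem_Lcen_insert {K : Type*} [Field K] {R : Type*} [Ring R] [Algebra K R]
    {H : Set R} {k : ℕ} {r : R} (hr : r ∈ Lcen k H)
    {j : ℕ} (hj1 : 1 ≤ j) (hjk : j ≤ k) (x : Fin k → R) (hx : ∀ i, x i ∈ H) :
    llc ((List.ofFn x).take j ++ r :: (List.ofFn x).drop j) = 0 := by
  open LcenAux in
  -- first, translate `hr` to the list-based centralizer
  have hrS : r ∈ LcenAux.Sn k H := by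
    intro t ht hlen
    have hx' : ∀ i : Fin k, t.get (Fin.cast hlen.symm i) ∈ H := fun i =>
      ht _ (t.get_mem _)
    have := hr (fun i => t.get (Fin.cast hlen.symm i)) hx'
    have heq : List.ofFn (fun i : Fin k => t.get (Fin.cast hlen.symm i)) = t := by
      apply List.ext_getElem
      · simp [hlen]
      · intro i h1 h2
        simp
    rwa [heq] at this
  set L := List.ofFn x with hL
  have hLlen : L.length = k := by simp [hL]
  have hLmem : ∀ a ∈ L, a ∈ H := by
    intro a ha
    rw [hL, List.mem_ofFn] at ha
    obtain ⟨i, rfl⟩ := ha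
    exact hx i
  have hlnil : L.take j ≠ [] := by
    intro h
    have := congrArg List.length h
    simp [hLlen] at this
    omega
  have hlmem : ∀ a ∈ L.take j, a ∈ H := fun a ha => hLmem a (List.take_subset j L ha)
  have htmem : ∀ a ∈ L.drop j, a ∈ H := fun a ha => hLmem a (List.drop_subset j L ha)
  have hllen : (L.take j).length = j := by simp [hLlen]; omega
  have htlen : (L.drop j).length = k - j := by simp [hLlen]
  obtain ⟨b, l', hcons⟩ := List.exists_cons_of_ne_nil hlnil
  set c := llc (L.take j) with hc
  have hkey : r * c - c * r ∈ LcenAux.Sn (k - j) H :=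
    hllen ▸ LcenAux.key (L.take j) hlnil hlmem k r hrS (by omega)
  rw [hcons]
  show lprod b (l' ++ r :: L.drop j) = 0
  rw [LcenAux.lprod_append, show lprod b l' = c from by rw [hc, hcons]; rfl,
    LcenAux.lprod_cons]
  have : c * r - r * c = -(r * c - c * r) := by noncomm_ring
  rw [this, LcenAux.lprod_neg, hkey (L.drop j) htmem htlen, neg_zero]
end
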